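/- Let X, Y be subsets of a finite set N with X ⊄ Y and Y ⊄ X. Then |X|·|N\X| + |Y|·|N\Y| > |X∩Y|·|N\(X∩Y)| + |X∪Y|·|N\(X∪Y)|. -/
import Mathlib


open Finset

theorem refinement_sum_decrease {α : Type*} [DecidableEq α]
    (N X Y : Finset α) (hX : X ⊆ N) (hY : Y ⊆ N)
    (hXY : ¬ X ⊆ Y) (hYX : ¬ Y ⊆ X) :
    (X ∩ Y).card * (N \ (X ∩ Y)).card + (X ∪ Y).card * (N \ (X ∪ Y)).card
      < X.card * (N \ X).card + Y.card * (N \ Y).card := by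
  have hiX : X ∩ Y ⊂ X := by
    constructor
    · exact inter_subset_left
    · intro h
      exact hXY fun a ha => (mem_inter.mp (h ha)).2
  have hiY : X ∩ Y ⊂ Y := by
    constructor
    · exact inter_subset_right
    · intro h
      exact hYX fun a ha => (mem_inter.mp (h ha)).1
  have hiN : X ∩ Y ⊆ N := inter_subset_left.trans hX
  have huN : X ∪ Y ⊆ N := union_subset hX hY
  have h1 : (X ∩ Y).card < X.card := card_lt_card hiX
  have h2 : (X ∩ Y).card < Y.card := card_lt_card hiY
  have h3 : (X ∩ Y).card + (X ∪ Y).card = X.card + Y.card := by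
    rw [add_comm]; exact card_union_add_card_inter X Y
  have h4 : X.card ≤ N.card := card_le_card hX
  have h5 : Y.card ≤ N.card := card_le_card hY
  have h6 : (X ∪ Y).card ≤ N.card := card_le_card huN
  have h7 : (X ∩ Y).card ≤ N.card := card_le_card hiN
  rw [card_sdiff_of_subset hX, card_sdiff_of_subset hY, card_sdiff_of_subset hiN, card_sdiff_of_subset huN]
  zify [h4, h5, h6, h7]
  nlinarith [sq_nonneg ((X.card : ℤ) - Y.card)]
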